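/- Let n ≥ 1 and p, j, k be natural numbers with 1 ≤ p, j ≥ 1, and k - p - 1 ≥ 1. Suppose α ∈ ℝ^p has all coordinates in [-1, 0) and β ∈ ℝ^{n-p-1} has all nonnegative coordinates, and suppose that for every choice of k-p-1 coordinates of β the sum -1 + σ_1(α) + (sum of those coordinates) is nonnegative. Then for any fixed set of j-1 indices {l₁,...,l_{j-1}} ⊆ {1,...,n-p-1}, the sum of the remaining coordinates of β satisfies ∑_{l∉{l₁,...,l_{j-1}}} β_l ≥ ((n-p-j)(p+1))/((k-p-1)p) · (-σ_1(α)), provided j ≤ n-p-1 and binomial coefficients C(n-p-j, k-p-1), C(n-p-j-1, k-p-2) are positive. -/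

import Mathlib

open Finset

lemma card_powersetCard_filter_mem {ι : Type*} [DecidableEq ι] (s : Finset ι) (m : ℕ)
    {l : ι} (hl : l ∈ s) :
    ((s.powersetCard (m+1)).filter (fun T => l ∈ T)).card = (s.card - 1).choose m := by
  have h1 : (s.powersetCard (m+1)).filter (fun T => l ∉ T) = (s.erase l).powersetCard (m+1) := by
    ext T
    simp only [mem_filter, mem_powersetCard, subset_erase]
    tauto
  have h2 := Finset.card_filter_add_card_filter_not
    (s := s.powersetCard (m+1)) (p := fun T => l ∈ T)
  rw [h1, card_powersetCard, card_powersetCard] at h2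
  have hs : s.card = (s.card - 1) + 1 := (Nat.succ_pred_eq_of_pos (card_pos.2 ⟨l, hl⟩)).symm
  rw [hs, Nat.choose_succ_succ] at h2
  simp [card_erase_of_mem hl] at h2 ⊢
  omega

lemma sum_powersetCard_sum {ι : Type*} [DecidableEq ι] (s : Finset ι) (m : ℕ) (f : ι → ℝ) :
    ∑ T ∈ s.powersetCard (m+1), ∑ l ∈ T, f l
      = ((s.card - 1).choose m : ℝ) * ∑ l ∈ s, f l := by
  have : ∀ T ∈ s.powersetCard (m+1), ∑ l ∈ T, f l = ∑ l ∈ s, if l ∈ T then f l else 0 := by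
    intro T hT
    rw [Finset.sum_ite_mem, Finset.inter_eq_right.2 (mem_powersetCard.1 hT).1]
  rw [Finset.sum_congr rfl this, Finset.sum_comm]
  rw [Finset.mul_sum]
  refine Finset.sum_congr rfl fun l hl => ?_
  rw [← Finset.sum_filter, Finset.sum_const, card_powersetCard_filter_mem s m hl]
  simp [mul_comm]

theorem beta_partial_sum_lower_bound (n p j k : ℕ)
    (hp : 1 ≤ p) (hj : 1 ≤ j) (hk : 1 ≤ k - p - 1)
    (α : Fin p → ℝ) (β : Fin (n - p - 1) → ℝ)
    (hα : ∀ i, -1 ≤ α i ∧ α i < 0) (hβ : ∀ l, 0 ≤ β l)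
    (hsum : ∀ T : Finset (Fin (n - p - 1)), T.card = k - p - 1 →
      0 ≤ -1 + (∑ i, α i) + ∑ l ∈ T, β l)
    (L : Finset (Fin (n - p - 1))) (hL : L.card = j - 1)
    (hjN : j ≤ n - p - 1)
    (hb1 : 0 < Nat.choose (n - p - j) (k - p - 1))
    (hb2 : 0 < Nat.choose (n - p - j - 1) (k - p - 2)) :
    ((n - p - j : ℕ) : ℝ) * ((p : ℝ) + 1) / (((k - p - 1 : ℕ) : ℝ) * (p : ℝ)) *
        (-(∑ i, α i)) ≤ ∑ l ∈ Lᶜ, β l := by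
  set S : ℝ := ∑ i, α i with hS
  set B : ℝ := ∑ l ∈ Lᶜ, β l with hB
  have hcompl : Lᶜ.card = n - p - j := by
    rw [Finset.card_compl, hL, Fintype.card_fin]
    omega
  have hmeq : k - p - 1 = (k - p - 2) + 1 := by omega
  -- sum of the hypothesis over all (k-p-1)-subsets of Lᶜ
  have h0 : 0 ≤ ((n-p-j).choose (k-p-1) : ℝ) * (-1 + S)
      + ((n-p-j-1).choose (k-p-2) : ℝ) * B := by
    have h : 0 ≤ ∑ T ∈ Lᶜ.powersetCard (k-p-1), (-1 + S + ∑ l ∈ T, β l) :=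
      Finset.sum_nonneg fun T hT => hsum T (mem_powersetCard.1 hT).2
    have h2 : ∑ T ∈ Lᶜ.powersetCard (k-p-1), (-1 + S + ∑ l ∈ T, β l)
        = ((n-p-j).choose (k-p-1) : ℝ) * (-1 + S)
          + ((n-p-j-1).choose (k-p-2) : ℝ) * B := by
      rw [Finset.sum_add_distrib, Finset.sum_const, card_powersetCard, hmeq,
        sum_powersetCard_sum, hcompl, ← hmeq]
      simp only [nsmul_eq_mul]
      rfl
    linarith [h2 ▸ h]
  -- S ≥ -p
  have hSp : -(p : ℝ) ≤ S := by
    have := Finset.sum_le_sum (s := (univ : Finset (Fin p)))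
      (f := fun _ => (-1 : ℝ)) (g := α) (fun i _ => (hα i).1)
    simpa using this
  -- choose identity
  have hid : ((n-p-j).choose (k-p-1)) * (k-p-1) = (n-p-j) * ((n-p-j-1).choose (k-p-2)) := by
    have hle : k - p - 1 ≤ n - p - j := by
      by_contra h
      rw [Nat.choose_eq_zero_of_lt (not_le.1 h)] at hb1
      exact absurd hb1 (lt_irrefl 0)
    have e1 : (n - p - j - 1) + 1 = n - p - j := by omega
    have e2 : (k - p - 2) + 1 = k - p - 1 := by omega
    have h := Nat.add_one_mul_choose_eq (n - p - j - 1) (k - p - 2)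
    rw [e1, e2] at h
    omega
  have hidR : (((n-p-j).choose (k-p-1)) : ℝ) * ((k-p-1 : ℕ) : ℝ)
      = ((n-p-j : ℕ) : ℝ) * (((n-p-j-1).choose (k-p-2)) : ℝ) := by
    exact_mod_cast congrArg (Nat.cast : ℕ → ℝ) hid
  have hmpos : (0:ℝ) < ((k-p-1 : ℕ) : ℝ) := by exact_mod_cast hk
  have hppos : (0:ℝ) < (p : ℝ) := by exact_mod_cast hp
  have hC2 : (0:ℝ) < (((n-p-j-1).choose (k-p-2)) : ℝ) := by exact_mod_cast hb2
  have hn0 : (0:ℝ) ≤ ((n-p-j : ℕ) : ℝ) := by positivity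
  rw [div_mul_eq_mul_div, div_le_iff₀ (by positivity)]
  -- reduce using the summed inequality
  have step1 : 0 ≤ ((n-p-j : ℕ):ℝ) * (p:ℝ) * (-1 + S) + ((k-p-1:ℕ):ℝ) * (p:ℝ) * B := by
    have mul1 : 0 ≤ ((k-p-1:ℕ):ℝ) * (p:ℝ) * (((n-p-j).choose (k-p-1) : ℝ) * (-1 + S)
        + ((n-p-j-1).choose (k-p-2) : ℝ) * B) := mul_nonneg (by positivity) h0
    have e : ((k-p-1:ℕ):ℝ) * (p:ℝ) * (((n-p-j).choose (k-p-1) : ℝ) * (-1 + S)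
        + ((n-p-j-1).choose (k-p-2) : ℝ) * B)
        = (((n-p-j-1).choose (k-p-2) : ℝ)) *
          (((n-p-j : ℕ):ℝ) * (p:ℝ) * (-1 + S) + ((k-p-1:ℕ):ℝ) * (p:ℝ) * B) := by
      linear_combination ((p:ℝ) * (-1 + S)) * hidR
    rw [e] at mul1
    nlinarith [mul1, hC2]
  nlinarith [step1, mul_le_mul_of_nonneg_left (show -S ≤ (p:ℝ) by linarith) hn0,
    mul_le_mul_of_nonneg_left (mul_le_mul_of_nonneg_left (show -S ≤ (p:ℝ) by linarith) hn0) hppos.le]
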